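/- Let ℓ, m ∈ ℤ with ℓ + 2 < m, let I = {ℓ, ℓ+1, …, m} and Ĩ = [ℓ+1, m−1]. If f : Ω → ℝ satisfies f(t) ∈ Ĩ for all t ∈ Ω, then there exists g : Ω → ℤ with g(t) ∈ I for all t ∈ Ω such that |Hf[0,1] − Hg[0,1]| ≤ 2^{−N−1}, |Hf[k,j] − Hg[k,j]| ≤ 2^{−N+(k−1)/2} for all (k,j) ∈ Ω̂ with k ≥ 1, and sup_{t∈Ω} |f(t) − g(t)| ≤ 1 − 2^{−N−1}. -/

import Mathlib

open Finset Real

noncomputable section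

/-- The time points `t[n] = -1/2 + (2n-1)/2^(N+1)` for `n = 1, …, 2^N`. -/
def tpt (N n : ℕ) : ℝ := -(1/2) + (2*(n:ℝ) - 1) / 2^(N+1)

/-- The Haar index points `P[k,j] = -1/2 + (2j-1)/2^k`. -/
def Ppt (k j : ℕ) : ℝ := -(1/2) + (2*(j:ℝ) - 1) / 2^k

/-- The mother Haar function `Haar[1,1]`. -/
def haar11 (t : ℝ) : ℝ :=
  if 0 < t ∧ t < 1/2 then 1 else if -(1/2) < t ∧ t < 0 then -1 else 0

/-- The Haar functions: `haar 0 1 = 1` and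
`haar k j t = 2^((k-1)/2) * haar11 (2^(k-1) (t - P[k,j]))` for `k ≥ 1`. -/
def haar (k j : ℕ) (t : ℝ) : ℝ :=
  if k = 0 then 1
  else (2:ℝ) ^ (((k:ℝ) - 1) / 2) * haar11 ((2:ℝ)^(k-1) * (t - Ppt k j))

/-- The inner product `⟨f,g⟩ = 2^{-N} ∑_{n=1}^{2^N} f[n] g[n]`. -/
def innerOmega (N : ℕ) (f g : ℕ → ℝ) : ℝ :=
  (1 / 2^N) * ∑ n ∈ Finset.Icc 1 (2^N), f n * g n

/-- The Haar transform `Hf[k,j] = ⟨Haar[k,j], f⟩`. -/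
def Htrans (N : ℕ) (f : ℕ → ℝ) (k j : ℕ) : ℝ :=
  innerOmega N (fun n => haar k j (tpt N n)) f

/-- The discrete Fourier transform `Ff[ξ] = 2^{-N} ∑_{n=1}^{2^N} e^{-2πi t[n] ξ} f[n]`. -/
def Ftrans (N : ℕ) (f : ℕ → ℝ) (ξ : ℤ) : ℂ :=
  (1 / 2^N : ℂ) * ∑ n ∈ Finset.Icc 1 (2^N),
    Complex.exp (-(2 * (Real.pi : ℂ) * Complex.I) * (tpt N n : ℂ) * (ξ : ℂ)) * (f n : ℂ)


/-- Sum of `f` over the `j`-th block of size `2^(N-k)`. -/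
def bS (N : ℕ) (f : ℕ → ℝ) (k j : ℕ) : ℝ :=
  ∑ n ∈ Finset.Ioc ((j-1) * 2^(N-k)) (j * 2^(N-k)), f n

/-- Quantized block sums, defined top-down. -/
def qS (N : ℕ) (f : ℕ → ℝ) : ℕ → ℕ → ℤ
  | 0, _ => round (bS N f 0 1)
  | (k+1), j =>
      let p := (j+1)/2
      let s := qS N f k p
      let r := round (((s:ℝ) - (bS N f (k+1) (2*p) - bS N f (k+1) (2*p-1)))/2)
      if j % 2 = 1 then r else s - r

/-- The rounding used at node `(k,p)`. -/
def rQ (N : ℕ) (f : ℕ → ℝ) (k p : ℕ) : ℤ :=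
  round ((((qS N f k p):ℝ) - (bS N f (k+1) (2*p) - bS N f (k+1) (2*p-1)))/2)

lemma qS_odd (N : ℕ) (f : ℕ → ℝ) (k p : ℕ) (hp : 1 ≤ p) :
    qS N f (k+1) (2*p-1) = rQ N f k p := by
  show (let p' := (2*p-1+1)/2; let s := qS N f k p';
        let r := round (((s:ℝ) - (bS N f (k+1) (2*p') - bS N f (k+1) (2*p'-1)))/2);
        if (2*p-1) % 2 = 1 then r else s - r) = rQ N f k p
  rw [show (2*p-1+1)/2 = p from by omega, show (2*p-1) % 2 = 1 from by omega]
  simp [rQ]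

lemma qS_even (N : ℕ) (f : ℕ → ℝ) (k p : ℕ) (hp : 1 ≤ p) :
    qS N f (k+1) (2*p) = qS N f k p - rQ N f k p := by
  show (let p' := (2*p+1)/2; let s := qS N f k p';
        let r := round (((s:ℝ) - (bS N f (k+1) (2*p') - bS N f (k+1) (2*p'-1)))/2);
        if (2*p) % 2 = 1 then r else s - r) = _
  rw [show (2*p+1)/2 = p from by omega, show (2*p) % 2 = 0 from by omega]
  simp [rQ]
noncomputable section

lemma block_split {β : Type*} [AddCommMonoid β] (N : ℕ) (F : ℕ → β) (k j : ℕ)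
    (hk : k < N) (hj : 1 ≤ j) :
    (∑ n ∈ Finset.Ioc ((j-1) * 2^(N-k)) (j * 2^(N-k)), F n)
      = (∑ n ∈ Finset.Ioc ((2*j-1-1) * 2^(N-(k+1))) ((2*j-1) * 2^(N-(k+1))), F n)
      + (∑ n ∈ Finset.Ioc ((2*j-1) * 2^(N-(k+1))) ((2*j) * 2^(N-(k+1))), F n) := by
  obtain ⟨j', rfl⟩ : ∃ j', j = j' + 1 := ⟨j - 1, by omega⟩
  have hM : N - k = (N - (k+1)) + 1 := by omega
  have e1 : (j' + 1 - 1) * 2^(N-k) = (2*(j'+1)-1-1) * 2^(N-(k+1)) := by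
    have h1 : 2*(j'+1)-1-1 = 2*j' := by omega
    have h2 : j' + 1 - 1 = j' := by omega
    rw [hM, pow_succ, h1, h2]; ring
  have e2 : (j' + 1) * 2^(N-k) = (2*(j'+1)) * 2^(N-(k+1)) := by
    rw [hM, pow_succ]; ring
  have h1 : (2*(j'+1)-1-1) * 2^(N-(k+1)) ≤ (2*(j'+1)-1) * 2^(N-(k+1)) :=
    Nat.mul_le_mul_right _ (by omega)
  have h2 : (2*(j'+1)-1) * 2^(N-(k+1)) ≤ (2*(j'+1)) * 2^(N-(k+1)) :=
    Nat.mul_le_mul_right _ (by omega)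
  rw [e1, e2, ← Finset.sum_Ioc_consecutive F h1 h2]

lemma bS_split (N : ℕ) (f : ℕ → ℝ) (k j : ℕ) (hk : k < N) (hj : 1 ≤ j) :
    bS N f k j = bS N f (k+1) (2*j-1) + bS N f (k+1) (2*j) := by
  unfold bS
  have := block_split N f k j hk hj
  rw [this]

/-- Leaf sums reconstruct quantized block sums. -/
lemma sum_qS (N : ℕ) (f : ℕ → ℝ) (d : ℕ) : ∀ k j, k + d = N → 1 ≤ j →
    (∑ n ∈ Finset.Ioc ((j-1) * 2^(N-k)) (j * 2^(N-k)), qS N f N n) = qS N f k j := by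
  induction d with
  | zero =>
      intro k j hk hj
      have hkN : k = N := by omega
      subst hkN
      have h0 : k - k = 0 := by omega
      have hIoc : Finset.Ioc ((j-1) * 2^(k-k)) (j * 2^(k-k)) = {j} := by
        ext x; simp only [Finset.mem_Ioc, Finset.mem_singleton, h0, pow_zero, mul_one]; omega
      rw [hIoc, Finset.sum_singleton]
  | succ d ih =>
      intro k j hk hj
      have hkN : k < N := by omega
      rw [block_split N _ k j hkN hj,
        ih (k+1) (2*j-1) (by omega) (by omega),
        ih (k+1) (2*j) (by omega) (by omega)]
      rw [qS_odd N f k j hj, qS_even N f k j hj]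
      ring

lemma qS_err (N : ℕ) (f : ℕ → ℝ) : ∀ k, k ≤ N → ∀ j, 1 ≤ j → j ≤ 2^k →
    |((qS N f k j : ℝ)) - bS N f k j| ≤ 1 - (1/2:ℝ)^(k+1) := by
  intro k
  induction k with
  | zero =>
      intro hk j hj1 hj2
      obtain rfl : j = 1 := by simpa using le_antisymm (by simpa using hj2) hj1
      show |((round (bS N f 0 1) : ℤ):ℝ) - bS N f 0 1| ≤ _
      rw [abs_sub_comm]
      have := abs_sub_round (bS N f 0 1)
      norm_num
      linarith
  | succ k ih =>
      intro hk1 j hj1 hj2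
      set p := (j+1)/2 with hpdef
      have hp1 : 1 ≤ p := by omega
      have hp2 : p ≤ 2^k := by
        have : j ≤ 2*2^k := by simpa [pow_succ, mul_comm] using hj2
        omega
      have hkN : k < N := by omega
      have hT := bS_split N f k p hkN hp1
      set X : ℝ := (((qS N f k p):ℝ) - (bS N f (k+1) (2*p) - bS N f (k+1) (2*p-1)))/2 with hX
      have hrQ : rQ N f k p = round X := rfl
      have hε := abs_le.mp (ih (by omega) p hp1 hp2)
      have hρ := abs_le.mp (abs_sub_round X)
      have hpow : (1/2:ℝ)^(k+1+1) = (1/2)^(k+1) * (1/2) := pow_succ _ _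
      have hpownn : (0:ℝ) ≤ (1/2:ℝ)^(k+1) := by positivity
      rcases Nat.even_or_odd j with he | ho
      · have hj : j = 2*p := by
          rcases he with ⟨c, hc⟩; omega
        rw [hj, qS_even N f k p hp1, hrQ]
        rw [abs_le]
        push_cast
        constructor <;> linarith
      · have hj : j = 2*p - 1 := by
          rcases ho with ⟨c, hc⟩; omega
        rw [hj, qS_odd N f k p hp1, hrQ]
        rw [abs_le]
        push_cast
        constructor <;> linarith

lemma qS_diff_err (N : ℕ) (f : ℕ → ℝ) (k p : ℕ) (hp : 1 ≤ p) :
    |(bS N f (k+1) (2*p) - bS N f (k+1) (2*p-1))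
      - (((qS N f (k+1) (2*p)):ℝ) - ((qS N f (k+1) (2*p-1)):ℝ))| ≤ 1 := by
  rw [qS_even N f k p hp, qS_odd N f k p hp]
  set X : ℝ := (((qS N f k p):ℝ) - (bS N f (k+1) (2*p) - bS N f (k+1) (2*p-1)))/2 with hX
  have hrQ : rQ N f k p = round X := rfl
  rw [hrQ]
  have hρ := abs_le.mp (abs_sub_round X)
  rw [abs_le]
  push_cast
  constructor <;> linarith [hX]


lemma haar_eval (N k j n : ℕ) (hk1 : 1 ≤ k) (hkN : k ≤ N) (hj1 : 1 ≤ j)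
    (hn1 : 1 ≤ n) :
    haar k j (tpt N n) = (2:ℝ) ^ (((k:ℝ)-1)/2) *
      (if (2*j-1) * 2^(N-k) < n ∧ n ≤ 2*j * 2^(N-k) then 1
       else if (2*j-2) * 2^(N-k) < n ∧ n ≤ (2*j-1) * 2^(N-k) then -1 else 0) := by
  have hk0 : k ≠ 0 := by omega
  rw [haar, if_neg hk0]
  congr 1
  set M := N - k with hM
  have hkey : (2:ℝ)^(k-1) * (tpt N n - Ppt k j)
      = ((2*(n:ℝ)-1) - (2*(j:ℝ)-1) * 2^(M+1)) / 2^(M+2) := by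
    rw [tpt, Ppt]
    have e1 : (2:ℝ)^(N+1) = 2^(k-1) * 2^(M+2) := by rw [← pow_add]; congr 1; omega
    have e2 : (2:ℝ)^k = 2^(k-1) * 2 := by
      conv_lhs => rw [show k = (k-1)+1 by omega]
      rw [pow_succ]
    rw [e1, e2]
    have hp1 : (0:ℝ) < (2:ℝ)^(k-1) := by positivity
    have hp2 : (0:ℝ) < (2:ℝ)^(M+2) := by positivity
    field_simp
    ring
  rw [hkey]
  have hc1 : (((2*j-1) * 2^(N-k) : ℕ) : ℝ) = (2*(j:ℝ)-1) * 2^M := by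
    push_cast [Nat.cast_sub (show 1 ≤ 2*j by omega)]
    ring
  have hc2 : (((2*j) * 2^(N-k) : ℕ) : ℝ) = (2*(j:ℝ)) * 2^M := by push_cast; ring
  have hc0 : (((2*j-2) * 2^(N-k) : ℕ) : ℝ) = (2*(j:ℝ)-2) * 2^M := by
    push_cast [Nat.cast_sub (show 2 ≤ 2*j by omega)]
    ring
  have hpM : (0:ℝ) < (2:ℝ)^M := by positivity
  have hpM2 : (0:ℝ) < (2:ℝ)^(M+2) := by positivity
  have hsplit1 : (2:ℝ)^(M+1) = 2 * 2^M := by rw [pow_succ]; ring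
  have hsplit2 : (2:ℝ)^(M+2) = 4 * 2^M := by rw [pow_succ, pow_succ]; ring
  simp only [haar11]
  by_cases h1 : (2*j-1) * 2^(N-k) < n ∧ n ≤ 2*j * 2^(N-k)
  · rw [if_pos h1]
    have r1 : (((2*j-1) * 2^(N-k) : ℕ) : ℝ) + 1 ≤ (n:ℝ) := by exact_mod_cast h1.1
    have r2 : ((n:ℝ)) ≤ (((2*j) * 2^(N-k) : ℕ) : ℝ) := by exact_mod_cast h1.2
    rw [hc1] at r1; rw [hc2] at r2
    have c1 : 0 < ((2*(n:ℝ)-1) - (2*(j:ℝ)-1) * 2^(M+1)) / 2^(M+2) := by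
      apply div_pos _ hpM2
      rw [hsplit1]; linarith
    have c2 : ((2*(n:ℝ)-1) - (2*(j:ℝ)-1) * 2^(M+1)) / 2^(M+2) < 1/2 := by
      rw [div_lt_iff₀ hpM2, hsplit1, hsplit2]; linarith
    rw [if_pos ⟨c1, c2⟩]
  · rw [if_neg h1]
    by_cases h2 : (2*j-2) * 2^(N-k) < n ∧ n ≤ (2*j-1) * 2^(N-k)
    · rw [if_pos h2]
      have r1 : (((2*j-2) * 2^(N-k) : ℕ) : ℝ) + 1 ≤ (n:ℝ) := by exact_mod_cast h2.1
      have r2 : ((n:ℝ)) ≤ (((2*j-1) * 2^(N-k) : ℕ) : ℝ) := by exact_mod_cast h2.2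
      rw [hc0] at r1; rw [hc1] at r2
      have c1 : ((2*(n:ℝ)-1) - (2*(j:ℝ)-1) * 2^(M+1)) / 2^(M+2) < 0 := by
        apply div_neg_of_neg_of_pos _ hpM2
        rw [hsplit1]; linarith
      have c2 : -(1/2) < ((2*(n:ℝ)-1) - (2*(j:ℝ)-1) * 2^(M+1)) / 2^(M+2) := by
        rw [lt_div_iff₀ hpM2, hsplit1, hsplit2]; linarith
      rw [if_neg (by push_neg; intro h; linarith), if_pos ⟨c2, c1⟩]
    · rw [if_neg h2]
      have hAB : (2*j-2) * 2^(N-k) ≤ (2*j-1) * 2^(N-k) := Nat.mul_le_mul_right _ (by omega)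
      have hBC : (2*j-1) * 2^(N-k) ≤ (2*j) * 2^(N-k) := Nat.mul_le_mul_right _ (by omega)
      have hcase : n ≤ (2*j-2) * 2^(N-k) ∨ (2*j) * 2^(N-k) < n := by
        rcases le_or_gt n ((2*j-2) * 2^(N-k)) with h | h
        · exact Or.inl h
        · rcases le_or_gt n ((2*j-1) * 2^(N-k)) with h' | h'
          · exact absurd ⟨h, h'⟩ h2
          · rcases le_or_gt n ((2*j) * 2^(N-k)) with h'' | h''
            · exact absurd ⟨h', h''⟩ h1
            · exact Or.inr h''
      rcases hcase with h | h
      · have r : ((n:ℝ)) ≤ (((2*j-2) * 2^(N-k) : ℕ) : ℝ) := by exact_mod_cast h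
        rw [hc0] at r
        have cneg : ((2*(n:ℝ)-1) - (2*(j:ℝ)-1) * 2^(M+1)) / 2^(M+2) ≤ -(1/2) := by
          rw [div_le_iff₀ hpM2, hsplit1, hsplit2]; linarith
        rw [if_neg (by push_neg; intro h'; linarith), if_neg (by push_neg; intro h'; linarith)]
      · have r : (((2*j) * 2^(N-k) : ℕ) : ℝ) + 1 ≤ (n:ℝ) := by exact_mod_cast h
        rw [hc2] at r
        have cpos : (1/2:ℝ) ≤ ((2*(n:ℝ)-1) - (2*(j:ℝ)-1) * 2^(M+1)) / 2^(M+2) := by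
          rw [le_div_iff₀ hpM2, hsplit1, hsplit2]; linarith
        rw [if_neg (by push_neg; intro h'; linarith), if_neg (by push_neg; intro h'; linarith)]


lemma Icc_eq_Ioc (m : ℕ) : Finset.Icc 1 m = Finset.Ioc 0 m := by
  ext x; simp [Finset.mem_Icc, Finset.mem_Ioc]; omega

lemma Htrans_sub (N : ℕ) (f g : ℕ → ℝ) (k j : ℕ) :
    Htrans N f k j - Htrans N g k j
      = (1/2^N) * ∑ n ∈ Finset.Icc 1 (2^N), haar k j (tpt N n) * (f n - g n) := by
  unfold Htrans innerOmega
  rw [← mul_sub, ← Finset.sum_sub_distrib]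
  congr 1
  exact Finset.sum_congr rfl (fun n _ => by ring)

lemma key_sum (N k j : ℕ) (f : ℕ → ℝ) (hk1 : 1 ≤ k) (hkN : k ≤ N)
    (hj1 : 1 ≤ j) (hj2 : j ≤ 2^(k-1)) :
    ∑ n ∈ Finset.Icc 1 (2^N), haar k j (tpt N n) * (f n - (qS N f N n : ℝ))
      = (2:ℝ)^(((k:ℝ)-1)/2) *
        ((bS N f k (2*j) - (qS N f k (2*j) : ℝ))
          - (bS N f k (2*j-1) - (qS N f k (2*j-1) : ℝ))) := by
  set c : ℝ := (2:ℝ)^(((k:ℝ)-1)/2) with hc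
  set A : ℕ := (2*j-2) * 2^(N-k) with hA
  set B : ℕ := (2*j-1) * 2^(N-k) with hB
  set C : ℕ := (2*j) * 2^(N-k) with hCdef
  have hAB : A ≤ B := Nat.mul_le_mul_right _ (by omega)
  have hBC : B ≤ C := Nat.mul_le_mul_right _ (by omega)
  have hC2N : C ≤ 2^N := by
    have h1 : 2*j ≤ 2^k := by
      calc 2*j ≤ 2*2^(k-1) := by omega
      _ = 2^k := by rw [← pow_succ']; congr 1; omega
    calc C ≤ 2^k * 2^(N-k) := Nat.mul_le_mul_right _ h1
    _ = 2^N := by rw [← pow_add]; congr 1; omega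
  have step1 : ∑ n ∈ Finset.Icc 1 (2^N), haar k j (tpt N n) * (f n - (qS N f N n : ℝ))
      = ∑ n ∈ Finset.Icc 1 (2^N),
          c * ((if B < n ∧ n ≤ C then (1:ℝ) else if A < n ∧ n ≤ B then -1 else 0)
            * (f n - (qS N f N n : ℝ))) := by
    apply Finset.sum_congr rfl
    intro n hn
    rw [Finset.mem_Icc] at hn
    rw [haar_eval N k j n hk1 hkN hj1 hn.1]
    ring
  rw [step1, ← Finset.mul_sum]
  congr 1
  rw [Icc_eq_Ioc]
  have hsub : Finset.Ioc A C ⊆ Finset.Ioc 0 (2^N) := by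
    intro x hx
    rw [Finset.mem_Ioc] at *
    omega
  rw [← Finset.sum_subset hsub (by
    intro x _ hx
    rw [Finset.mem_Ioc] at hx
    push_neg at hx
    have h1 : ¬(B < x ∧ x ≤ C) := by
      rintro ⟨u, v⟩
      have := hx (by omega)
      omega
    have h2 : ¬(A < x ∧ x ≤ B) := by
      rintro ⟨u, v⟩
      have := hx u
      omega
    rw [if_neg h1, if_neg h2, zero_mul])]
  rw [← Finset.sum_Ioc_consecutive _ hAB hBC]
  have e1 : ∑ n ∈ Finset.Ioc A B,
      ((if B < n ∧ n ≤ C then (1:ℝ) else if A < n ∧ n ≤ B then -1 else 0)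
        * (f n - (qS N f N n : ℝ)))
      = -(bS N f k (2*j-1) - (qS N f k (2*j-1) : ℝ)) := by
    have : ∀ n ∈ Finset.Ioc A B,
        ((if B < n ∧ n ≤ C then (1:ℝ) else if A < n ∧ n ≤ B then -1 else 0)
          * (f n - (qS N f N n : ℝ))) = -(f n - (qS N f N n : ℝ)) := by
      intro n hn
      rw [Finset.mem_Ioc] at hn
      rw [if_neg (by rintro ⟨u, v⟩; omega), if_pos hn]
      ring
    rw [Finset.sum_congr rfl this, Finset.sum_neg_distrib, Finset.sum_sub_distrib]
    have hblock : Finset.Ioc A B = Finset.Ioc ((2*j-1-1) * 2^(N-k)) ((2*j-1) * 2^(N-k)) := by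
      rw [hA, hB]; congr 2 <;> omega
    have hq : ∑ n ∈ Finset.Ioc A B, (qS N f N n : ℝ) = (qS N f k (2*j-1) : ℝ) := by
      rw [hblock, ← sum_qS N f (N-k) k (2*j-1) (by omega) (by omega)]
      push_cast
      ring
    have hbs : bS N f k (2*j-1) = ∑ n ∈ Finset.Ioc A B, f n := by
      unfold bS; rw [← hblock]
    rw [hq, hbs]
  have e2 : ∑ n ∈ Finset.Ioc B C,
      ((if B < n ∧ n ≤ C then (1:ℝ) else if A < n ∧ n ≤ B then -1 else 0)
        * (f n - (qS N f N n : ℝ)))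
      = (bS N f k (2*j) - (qS N f k (2*j) : ℝ)) := by
    have : ∀ n ∈ Finset.Ioc B C,
        ((if B < n ∧ n ≤ C then (1:ℝ) else if A < n ∧ n ≤ B then -1 else 0)
          * (f n - (qS N f N n : ℝ))) = (f n - (qS N f N n : ℝ)) := by
      intro n hn
      rw [Finset.mem_Ioc] at hn
      rw [if_pos hn]
      ring
    rw [Finset.sum_congr rfl this, Finset.sum_sub_distrib]
    have hblock : Finset.Ioc B C = Finset.Ioc ((2*j-1) * 2^(N-k)) ((2*j) * 2^(N-k)) := rfl
    have hq : ∑ n ∈ Finset.Ioc B C, (qS N f N n : ℝ) = (qS N f k (2*j) : ℝ) := by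
      rw [hblock, ← sum_qS N f (N-k) k (2*j) (by omega) (by omega)]
      push_cast
      ring
    have hbs : bS N f k (2*j) = ∑ n ∈ Finset.Ioc B C, f n := by
      unfold bS; rw [← hblock]
    rw [hq, hbs]
  rw [e1, e2]
  ring

lemma bS_leaf (N : ℕ) (f : ℕ → ℝ) (n : ℕ) (hn : 1 ≤ n) : bS N f N n = f n := by
  unfold bS
  rw [Nat.sub_self, pow_zero, mul_one, mul_one]
  have h : Finset.Ioc (n-1) n = {n} := by
    ext x; simp only [Finset.mem_Ioc, Finset.mem_singleton]; omega
  rw [h, Finset.sum_singleton]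

lemma rpow_neg_nat (N : ℕ) : (2:ℝ) ^ (-(N:ℝ)) = 1 / 2^N := by
  rw [Real.rpow_neg (by norm_num), Real.rpow_natCast, one_div]

lemma rpow_val1 (N : ℕ) : (2:ℝ) ^ (-(N:ℝ) - 1) = (1/2^N) * (1/2) := by
  rw [show -(N:ℝ) - 1 = -(((N+1:ℕ)):ℝ) by push_cast; ring, rpow_neg_nat (N+1), pow_succ]
  ring

lemma rpow_val2 (N : ℕ) : (2:ℝ) ^ (-(N:ℝ) - 1) = (1/2:ℝ)^(N+1) := by
  rw [rpow_val1, div_pow, one_pow, pow_succ]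
  ring

lemma rpow_val3 (N k : ℕ) :
    (2:ℝ) ^ (-(N:ℝ) + ((k:ℝ)-1)/2) = (1/2^N) * (2:ℝ)^(((k:ℝ)-1)/2) := by
  rw [Real.rpow_add (by norm_num : (0:ℝ) < 2), rpow_neg_nat]

theorem finite_value_quantization_aux (N : ℕ) (l m : ℤ) (hlm : l + 2 < m) (f : ℕ → ℝ)
    (hf : ∀ n ∈ Finset.Icc 1 (2^N), f n ∈ Set.Icc ((l:ℝ) + 1) ((m:ℝ) - 1)) :
    ∃ g : ℕ → ℤ,
      (∀ n ∈ Finset.Icc 1 (2^N), g n ∈ Set.Icc l m) ∧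
      |Htrans N f 0 1 - Htrans N (fun n => (g n : ℝ)) 0 1| ≤ (2:ℝ) ^ (-(N:ℝ) - 1) ∧
      (∀ k j : ℕ, 1 ≤ k → k ≤ N → 1 ≤ j → j ≤ 2^(k-1) →
        |Htrans N f k j - Htrans N (fun n => (g n : ℝ)) k j| ≤
          (2:ℝ) ^ (-(N:ℝ) + ((k:ℝ) - 1) / 2)) ∧
      (∀ n ∈ Finset.Icc 1 (2^N), |f n - (g n : ℝ)| ≤ 1 - (2:ℝ) ^ (-(N:ℝ) - 1)) := by
  refine ⟨fun n => qS N f N n, ?_, ?_, ?_, ?_⟩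
  · -- range
    intro n hn
    rw [Finset.mem_Icc] at hn
    have herr := qS_err N f N le_rfl n hn.1 hn.2
    rw [bS_leaf N f n hn.1] at herr
    have herr' := abs_le.mp herr
    have hfn := hf n (by rw [Finset.mem_Icc]; exact hn)
    rw [Set.mem_Icc] at hfn
    have hpos : (0:ℝ) < (1/2:ℝ)^(N+1) := by positivity
    constructor
    · have : (l:ℝ) < (qS N f N n : ℝ) := by linarith
      exact_mod_cast this.le
    · have : ((qS N f N n : ℝ)) < (m:ℝ) := by linarith
      exact_mod_cast this.le
  · -- k = 0
    rw [Htrans_sub]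
    have h1 : ∀ n ∈ Finset.Icc 1 (2^N),
        haar 0 1 (tpt N n) * (f n - (qS N f N n : ℝ)) = f n - (qS N f N n : ℝ) := by
      intro n _
      rw [haar, if_pos rfl, one_mul]
    rw [Finset.sum_congr rfl h1, Finset.sum_sub_distrib, Icc_eq_Ioc]
    have hb : Finset.Ioc 0 (2^N) = Finset.Ioc ((1-1) * 2^(N-0)) (1 * 2^(N-0)) := by
      norm_num
    have hq : ∑ n ∈ Finset.Ioc 0 (2^N), (qS N f N n : ℝ) = (qS N f 0 1 : ℝ) := by
      rw [hb, ← sum_qS N f N 0 1 (by omega) le_rfl]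
      push_cast
      ring
    have hbs : ∑ n ∈ Finset.Ioc 0 (2^N), f n = bS N f 0 1 := by
      rw [hb]; rfl
    rw [hq, hbs]
    have hround : qS N f 0 1 = round (bS N f 0 1) := rfl
    rw [hround, rpow_val1, abs_mul]
    have h2N : |(1:ℝ)/2^N| = 1/2^N := abs_of_pos (by positivity)
    rw [h2N]
    apply mul_le_mul_of_nonneg_left _ (by positivity)
    exact abs_sub_round _
  · -- k ≥ 1
    intro k j hk1 hkN hj1 hj2
    rw [Htrans_sub, key_sum N k j f hk1 hkN hj1 hj2, rpow_val3]
    rw [abs_mul, abs_mul]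
    have h2N : |(1:ℝ)/2^N| = 1/2^N := abs_of_pos (by positivity)
    have hcabs : |(2:ℝ)^(((k:ℝ)-1)/2)| = (2:ℝ)^(((k:ℝ)-1)/2) :=
      abs_of_pos (Real.rpow_pos_of_pos (by norm_num) _)
    rw [h2N, hcabs]
    have hk' : k - 1 + 1 = k := by omega
    have hδ := qS_diff_err N f (k-1) j hj1
    rw [hk'] at hδ
    have hΔ : |(bS N f k (2*j) - (qS N f k (2*j):ℝ))
        - (bS N f k (2*j-1) - (qS N f k (2*j-1):ℝ))| ≤ 1 := by
      have heq : (bS N f k (2*j) - (qS N f k (2*j):ℝ))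
          - (bS N f k (2*j-1) - (qS N f k (2*j-1):ℝ))
          = (bS N f k (2*j) - bS N f k (2*j-1))
            - ((qS N f k (2*j):ℝ) - (qS N f k (2*j-1):ℝ)) := by ring
      rw [heq]
      exact hδ
    have hc0 : (0:ℝ) < (2:ℝ)^(((k:ℝ)-1)/2) := Real.rpow_pos_of_pos (by norm_num) _
    have h2 : (0:ℝ) < 1/2^N := by positivity
    have step : (2:ℝ)^(((k:ℝ)-1)/2) * |(bS N f k (2*j) - (qS N f k (2*j):ℝ))
        - (bS N f k (2*j-1) - (qS N f k (2*j-1):ℝ))| ≤ (2:ℝ)^(((k:ℝ)-1)/2) * 1 :=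
      mul_le_mul_of_nonneg_left hΔ hc0.le
    calc (1/2^N) * ((2:ℝ)^(((k:ℝ)-1)/2) * |(bS N f k (2*j) - (qS N f k (2*j):ℝ))
          - (bS N f k (2*j-1) - (qS N f k (2*j-1):ℝ))|)
        ≤ (1/2^N) * ((2:ℝ)^(((k:ℝ)-1)/2) * 1) := mul_le_mul_of_nonneg_left step h2.le
      _ = (1/2^N) * (2:ℝ)^(((k:ℝ)-1)/2) := by ring
  · -- sup bound
    intro n hn
    rw [Finset.mem_Icc] at hn
    have herr := qS_err N f N le_rfl n hn.1 hn.2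
    rw [bS_leaf N f n hn.1, abs_sub_comm] at herr
    rw [rpow_val2]
    exact herr

/-- **Corollary (finite-value quantization).** If `ℓ + 2 < m` and `f` takes values in
`Ĩ = [ℓ+1, m−1]`, then the quantization `g` can be taken with values in `I = {ℓ, …, m}`. -/
theorem finite_value_quantization (N : ℕ) (l m : ℤ) (hlm : l + 2 < m) (f : ℕ → ℝ)
    (hf : ∀ n ∈ Finset.Icc 1 (2^N), f n ∈ Set.Icc ((l:ℝ) + 1) ((m:ℝ) - 1)) :
    ∃ g : ℕ → ℤ,
      (∀ n ∈ Finset.Icc 1 (2^N), g n ∈ Set.Icc l m) ∧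
      |Htrans N f 0 1 - Htrans N (fun n => (g n : ℝ)) 0 1| ≤ (2:ℝ) ^ (-(N:ℝ) - 1) ∧
      (∀ k j : ℕ, 1 ≤ k → k ≤ N → 1 ≤ j → j ≤ 2^(k-1) →
        |Htrans N f k j - Htrans N (fun n => (g n : ℝ)) k j| ≤
          (2:ℝ) ^ (-(N:ℝ) + ((k:ℝ) - 1) / 2)) ∧
      (∀ n ∈ Finset.Icc 1 (2^N), |f n - (g n : ℝ)| ≤ 1 - (2:ℝ) ^ (-(N:ℝ) - 1)) :=
  finite_value_quantization_aux N l m hlm f hf
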